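/- Let m ≥ 2 be an odd integer, ω = e^{2πi/m}, and a ∈ {1,...,m−1}. Then max{|(1−ω^a)/2|, |(1+ω^a)/2|} ≤ cos(π/(2m)). -/

import Mathlib

open Complex

lemma abs_one_sub_exp_sq (t : ℝ) :
    ‖1 - Complex.exp (t * Complex.I)‖ ^ 2 = 2 - 2 * Real.cos t := by
  rw [Complex.exp_mul_I, Complex.sq_norm]
  simp [Complex.normSq_apply, Complex.cos_ofReal_re, Complex.sin_ofReal_re]
  nlinarith [Real.sin_sq_add_cos_sq t]

lemma abs_one_add_exp_sq (t : ℝ) :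
    ‖1 + Complex.exp (t * Complex.I)‖ ^ 2 = 2 + 2 * Real.cos t := by
  rw [Complex.exp_mul_I, Complex.sq_norm]
  simp [Complex.normSq_apply, Complex.cos_ofReal_re, Complex.sin_ofReal_re]
  nlinarith [Real.sin_sq_add_cos_sq t]

/-- for odd `m ≥ 2`, `ω = e^{2πi/m}` and `a ∈ {1,…,m−1}`,
`max{|(1−ω^a)/2|, |(1+ω^a)/2|} ≤ cos(π/(2m))`. -/
theorem max_root_of_unity_bound (m : ℕ) (hm : 2 ≤ m) (hodd : Odd m)
    (a : ℕ) (ha : 1 ≤ a) (ham : a ≤ m - 1) :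
    max ‖(1 - Complex.exp (2 * Real.pi * Complex.I / m) ^ a) / 2‖
        ‖(1 + Complex.exp (2 * Real.pi * Complex.I / m) ^ a) / 2‖
      ≤ Real.cos (Real.pi / (2 * m)) := by
  have hmpos : 0 < m := by omega
  have hm0 : (0:ℝ) < m := by exact_mod_cast hmpos
  have hπ := Real.pi_pos
  set t : ℝ := 2 * Real.pi * a / m with ht
  have hexp : Complex.exp (2 * Real.pi * Complex.I / m) ^ a
      = Complex.exp ((t : ℝ) * Complex.I) := by
    rw [← Complex.exp_nat_mul]
    congr 1
    have htc : (t:ℂ) = 2 * Real.pi * a / m := by rw [ht]; push_cast; ring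
    rw [htc]
    have hmc : (m:ℂ) ≠ 0 := by exact_mod_cast hmpos.ne'
    field_simp
  rw [hexp]
  -- basic bounds on a
  have ha' : (1:ℝ) ≤ a := by exact_mod_cast ha
  have ham' : (a:ℝ) + 1 ≤ (m:ℝ) := by
    have h : a + 1 ≤ m := by omega
    exact_mod_cast h
  have hne : 2 * a ≠ m := by
    intro h; exact (Nat.not_odd_iff_even.mpr ⟨a, by omega⟩) hodd
  -- key trig bounds
  have key1 : Real.cos t ≤ Real.cos (Real.pi / m) := by
    rcases lt_or_gt_of_ne hne with hcase | hcase
    · have h1 : (2*a:ℝ) + 1 ≤ m := by exact_mod_cast hcase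
      have htle : t ≤ Real.pi := by
        rw [ht, div_le_iff₀ hm0]; nlinarith
      have hge : Real.pi / m ≤ t := by
        rw [ht]; gcongr; nlinarith
      exact Real.cos_le_cos_of_nonneg_of_le_pi (by positivity) htle hge
    · have h1 : (m:ℝ) + 1 ≤ 2*a := by exact_mod_cast hcase
      have heq : Real.cos t = Real.cos (2 * Real.pi - t) := by
        rw [Real.cos_two_pi_sub]
      rw [heq]
      have htle : 2 * Real.pi - t ≤ Real.pi := by
        rw [ht]; rw [sub_le_iff_le_add]
        have : Real.pi ≤ 2 * Real.pi * a / m := by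
          rw [le_div_iff₀ hm0]; nlinarith
        linarith
      have hge : Real.pi / m ≤ 2 * Real.pi - t := by
        rw [ht, le_sub_iff_add_le, ← add_div, div_le_iff₀ hm0]
        nlinarith
      exact Real.cos_le_cos_of_nonneg_of_le_pi (by positivity) htle hge
  have key2 : -(Real.cos (Real.pi / m)) ≤ Real.cos t := by
    rw [← Real.cos_pi_sub]
    rcases lt_or_gt_of_ne hne with hcase | hcase
    · have h1 : (2*a:ℝ) + 1 ≤ m := by exact_mod_cast hcase
      have htle : t ≤ Real.pi - Real.pi / m := by
        rw [ht, div_le_iff₀ hm0]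
        have : (Real.pi - Real.pi / m) * m = Real.pi * m - Real.pi := by
          field_simp
        rw [this]; nlinarith
      refine Real.cos_le_cos_of_nonneg_of_le_pi (by positivity) ?_ htle
      have : 0 < Real.pi / m := by positivity
      linarith
    · have h1 : (m:ℝ) + 1 ≤ 2*a := by exact_mod_cast hcase
      have heq : Real.cos t = Real.cos (2 * Real.pi - t) := by
        rw [Real.cos_two_pi_sub]
      rw [heq]
      have hge0 : 0 ≤ 2 * Real.pi - t := by
        rw [ht, sub_nonneg, div_le_iff₀ hm0]; nlinarith
      have htle : 2 * Real.pi - t ≤ Real.pi - Real.pi / m := by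
        rw [ht, sub_le_iff_le_add]
        have h2 : Real.pi - Real.pi / m + 2 * Real.pi * a / m
            = (Real.pi * m - Real.pi + 2 * Real.pi * a) / m := by
          field_simp
        rw [h2, le_div_iff₀ hm0]; nlinarith
      refine Real.cos_le_cos_of_nonneg_of_le_pi hge0 ?_ htle
      have : 0 < Real.pi / m := by positivity
      linarith
  -- the target cosine
  have hceq : 2 * (Real.pi / (2 * m)) = Real.pi / m := by
    field_simp
  have hc2 : Real.cos (Real.pi / (2 * m)) ^ 2 = 1/2 + Real.cos (Real.pi / m) / 2 := by
    rw [Real.cos_sq, hceq]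
  have hc0 : 0 ≤ Real.cos (Real.pi / (2 * m)) := by
    apply Real.cos_nonneg_of_mem_Icc
    constructor
    · have : 0 ≤ Real.pi / (2 * m) := by positivity
      linarith
    · rw [div_le_div_iff₀ (by positivity) (by norm_num : (0:ℝ) < 2)]
      nlinarith
  apply max_le
  · rw [norm_div, Complex.norm_two]
    have h1 := abs_one_sub_exp_sq t
    have h2 := norm_nonneg (1 - Complex.exp ((t:ℝ) * Complex.I))
    nlinarith [sq_nonneg (‖1 - Complex.exp ((t:ℝ) * Complex.I)‖ - 2 * Real.cos (Real.pi / (2*m)))]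
  · rw [norm_div, Complex.norm_two]
    have h1 := abs_one_add_exp_sq t
    have h2 := norm_nonneg (1 + Complex.exp ((t:ℝ) * Complex.I))
    nlinarith [sq_nonneg (‖1 + Complex.exp ((t:ℝ) * Complex.I)‖ - 2 * Real.cos (Real.pi / (2*m)))]
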